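/- (Duality Lemma) Let m ≥ 2 be an integer and define λ_m(n) = ∑_{d : d^m ∣ n} μ(n/d^m). For a positive integer n > 1, let p(n) denote the smallest prime divisor of n, with the convention p(1) = 1, and let P_m(n) denote the largest prime p dividing n whose exponent in the prime factorization of n is not divisible by m, with the convention P_m(n) = 1 when n is a perfect m-th power. Then for any function f on the positive integers with f(1) = 0 and any positive integer n, ∑_{d ∣ n} λ_m(d) · f(p(d)) = −f(P_m(n)). -/

import Mathlib

open Finset ArithmeticFunction

/-- `lambdaM m n = ∑_{d : d^m ∣ n} μ(n / d^m)`. -/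
def lambdaM (m n : ℕ) : ℤ :=
  ∑ d ∈ n.divisors.filter (fun d => d ^ m ∣ n), moebius (n / d ^ m)

/-- `Pm m n` is the largest prime factor of `n` whose multiplicity in `n` is not divisible
by `m`, with `Pm m n = 1` if there is no such prime (e.g. if `n` is a perfect `m`-th power). -/
def Pm (m n : ℕ) : ℕ :=
  WithBot.unbotD 1 ((n.primeFactors.filter (fun p => ¬ m ∣ n.factorization p)).max)

open Classical in
noncomputable def chiF (m : ℕ) : ArithmeticFunction ℤ :=
  ⟨fun n => if n ≠ 0 ∧ ∃ k, k ^ m = n then 1 else 0,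
   by beta_reduce; rw [if_neg]; rintro ⟨h, -⟩; exact h rfl⟩

open Classical in
lemma chiF_apply (m n : ℕ) : chiF m n = if n ≠ 0 ∧ ∃ k, k ^ m = n then 1 else 0 := rfl

lemma pow_iff_fac {m n : ℕ} (hm : m ≠ 0) (hn : n ≠ 0) :
    (∃ k, k ^ m = n) ↔ ∀ p, m ∣ n.factorization p := by
  constructor
  · rintro ⟨k, rfl⟩ p
    rw [Nat.factorization_pow]
    exact Dvd.intro _ rfl
  · intro h
    refine ⟨Nat.floorRoot m n, Nat.dvd_antisymm (Nat.floorRoot_pow_dvd) ?_⟩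
    have hr : Nat.floorRoot m n ≠ 0 := Nat.floorRoot_ne_zero.2 ⟨hm, hn⟩
    rw [← Nat.factorization_le_iff_dvd hn (pow_ne_zero _ hr)]
    intro p
    rw [Nat.factorization_pow, Nat.factorization_floorRoot]
    simp only [Finsupp.smul_apply, smul_eq_mul]
    rw [Finsupp.floorDiv_apply]
    exact le_of_eq (Nat.mul_div_cancel' (h p)).symm

lemma isMultiplicative_chiF {m : ℕ} (hm : m ≠ 0) : (chiF m).IsMultiplicative := by
  constructor
  · rw [chiF_apply, if_pos ⟨one_ne_zero, 1, one_pow m⟩]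
  · intro a b hab
    rcases eq_or_ne a 0 with rfl | ha
    · have hb : b = 1 := by simpa using hab
      subst hb; simp [chiF_apply]
    rcases eq_or_ne b 0 with rfl | hb
    · have ha' : a = 1 := by simpa using hab
      subst ha'; simp [chiF_apply]
    have hab0 : a * b ≠ 0 := mul_ne_zero ha hb
    rw [chiF_apply, chiF_apply, chiF_apply]
    have hsplit : ∀ p : ℕ, a.factorization p = 0 ∨ b.factorization p = 0 := by
      intro p
      by_contra hc
      push_neg at hc
      have hpa : p ∣ a := Nat.dvd_of_factorization_pos hc.1
      have hpb : p ∣ b := Nat.dvd_of_factorization_pos hc.2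
      have hp1 : p = 1 := Nat.dvd_one.mp (hab ▸ Nat.dvd_gcd hpa hpb)
      exact hc.1 (hp1 ▸ Nat.factorization_eq_zero_of_not_prime a Nat.not_prime_one)
    have key : (∃ k, k ^ m = a * b) ↔ (∃ k, k ^ m = a) ∧ (∃ k, k ^ m = b) := by
      rw [pow_iff_fac hm hab0, pow_iff_fac hm ha, pow_iff_fac hm hb]
      constructor
      · intro h
        constructor <;> intro p <;> have hh := h p <;>
          rw [Nat.factorization_mul ha hb, Finsupp.add_apply] at hh <;>
          rcases hsplit p with h0 | h0 <;> simp [h0] at hh ⊢ <;> exact hh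
      · rintro ⟨h1, h2⟩ p
        rw [Nat.factorization_mul ha hb, Finsupp.add_apply]
        exact Nat.dvd_add (h1 p) (h2 p)
    by_cases h : (∃ k, k ^ m = a) ∧ (∃ k, k ^ m = b)
    · rw [if_pos ⟨hab0, key.2 h⟩, if_pos ⟨ha, h.1⟩, if_pos ⟨hb, h.2⟩]; ring
    · rw [if_neg (fun hc => h (key.1 hc.2))]
      rcases not_and_or.1 h with h' | h'
      · rw [if_neg (fun hc => h' hc.2)]; ring
      · rw [if_neg (fun hc : b ≠ 0 ∧ ∃ k, k ^ m = b => h' hc.2)]; ring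

lemma lambdaM_eq {m : ℕ} (hm : m ≠ 0) (n : ℕ) :
    lambdaM m n = (chiF m * (moebius : ArithmeticFunction ℤ)) n := by
  classical
  rcases eq_or_ne n 0 with rfl | hn
  · simp [lambdaM]
  rw [mul_apply, Nat.sum_divisorsAntidiagonal (fun a b => chiF m a * moebius b)]
  have : ∀ i ∈ n.divisors, chiF m i * moebius (n / i)
      = if ∃ k, k ^ m = i then moebius (n / i) else 0 := by
    intro i hi
    have hi0 : i ≠ 0 := (Nat.pos_of_mem_divisors hi).ne'
    rw [chiF_apply]
    by_cases h : ∃ k, k ^ m = i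
    · rw [if_pos ⟨hi0, h⟩, if_pos h, one_mul]
    · rw [if_neg (fun hc => h hc.2), if_neg h, zero_mul]
  rw [Finset.sum_congr rfl this, ← Finset.sum_filter]
  unfold lambdaM
  refine Finset.sum_bij (fun d _ => d ^ m) ?_ ?_ ?_ ?_
  · intro d hd
    rw [Finset.mem_filter] at hd ⊢
    exact ⟨Nat.mem_divisors.2 ⟨hd.2, hn⟩, d, rfl⟩
  · intro d hd d' hd' h
    exact Nat.pow_left_injective (by omega) h
  · intro i hi
    rw [Finset.mem_filter] at hi
    obtain ⟨hi1, k, rfl⟩ := hi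
    refine ⟨k, Finset.mem_filter.2 ⟨Nat.mem_divisors.2
      ⟨dvd_trans (dvd_pow_self k hm) (Nat.mem_divisors.1 hi1).1, hn⟩,
      (Nat.mem_divisors.1 hi1).1⟩, rfl⟩
  · intro d hd; rfl

lemma lambdaM_mul {m : ℕ} (hm : m ≠ 0) {a b : ℕ} (hab : a.Coprime b) :
    lambdaM m (a * b) = lambdaM m a * lambdaM m b := by
  rw [lambdaM_eq hm, lambdaM_eq hm, lambdaM_eq hm]
  exact ((isMultiplicative_chiF hm).mul isMultiplicative_moebius).map_mul_of_coprime hab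

lemma sum_divisors_lambdaM {m : ℕ} (hm : m ≠ 0) (n : ℕ) :
    ∑ d ∈ n.divisors, lambdaM m d = chiF m n := by
  have : ∀ d ∈ n.divisors, lambdaM m d = (chiF m * (moebius : ArithmeticFunction ℤ)) d :=
    fun d _ => lambdaM_eq hm d
  rw [Finset.sum_congr rfl this, ← coe_mul_zeta_apply, mul_assoc, moebius_mul_coe_zeta, mul_one]

lemma sum_divisors_coprime_mul {M : Type*} [AddCommMonoid M] {a b : ℕ}
    (ha : a ≠ 0) (hb : b ≠ 0) (hab : a.Coprime b) (F : ℕ → M) :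
    ∑ d ∈ (a * b).divisors, F d = ∑ x ∈ a.divisors, ∑ y ∈ b.divisors, F (x * y) := by
  rw [← Finset.sum_product']
  refine Finset.sum_nbij' (fun d => (d.gcd a, d.gcd b)) (fun x => x.1 * x.2) ?_ ?_ ?_ ?_ ?_
  · intro d hd
    rw [Nat.mem_divisors] at hd
    simp only [Finset.mem_product, Nat.mem_divisors]
    exact ⟨⟨Nat.gcd_dvd_right d a, ha⟩, ⟨Nat.gcd_dvd_right d b, hb⟩⟩
  · intro x hx
    simp only [Finset.mem_product, Nat.mem_divisors] at hx
    exact Nat.mem_divisors.2 ⟨mul_dvd_mul hx.1.1 hx.2.1, mul_ne_zero ha hb⟩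
  · intro d hd
    rw [Nat.mem_divisors] at hd
    show d.gcd a * d.gcd b = d
    rw [← Nat.Coprime.gcd_mul d hab, Nat.gcd_eq_left hd.1]
  · intro x hx
    simp only [Finset.mem_product, Nat.mem_divisors] at hx
    have h1 : (x.1 * x.2).gcd a = x.1 := by
      rw [Nat.Coprime.gcd_mul_right_cancel x.1
        (Nat.Coprime.coprime_dvd_left hx.2.1 hab.symm)]
      exact Nat.gcd_eq_left hx.1.1
    have h2 : (x.1 * x.2).gcd b = x.2 := by
      rw [mul_comm, Nat.Coprime.gcd_mul_right_cancel x.2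
        (Nat.Coprime.coprime_dvd_left hx.1.1 hab)]
      exact Nat.gcd_eq_left hx.2.1
    simp [h1, h2]
  · intro d hd
    rw [Nat.mem_divisors] at hd
    show F d = F (d.gcd a * d.gcd b)
    rw [← Nat.Coprime.gcd_mul d hab, Nat.gcd_eq_left hd.1]

lemma lambdaM_one (m : ℕ) : lambdaM m 1 = 1 := by
  unfold lambdaM
  rw [Nat.divisors_one, Finset.filter_singleton]
  simp

theorem duality_lemma (m : ℕ) (hm : 2 ≤ m) (f : ℕ → ℝ) (hf : f 1 = 0)
    (n : ℕ) (hn : 0 < n) :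
    ∑ d ∈ n.divisors, (lambdaM m d : ℝ) * f d.minFac = -f (Pm m n) := by
  classical
  have hm0 : m ≠ 0 := by omega
  induction n using Nat.strong_induction_on with
  | _ n ih =>
  rcases eq_or_ne n 1 with rfl | hn1
  · simp [Pm, lambdaM_one, hf]
  -- now n > 1
  set p := n.minFac with hp_def
  have hp : p.Prime := Nat.minFac_prime hn1
  have hpn : p ∣ n := Nat.minFac_dvd n
  set a := n.factorization p with ha_def
  have ha1 : 1 ≤ a := hp.factorization_pos_of_dvd hn.ne' hpn
  set n' := ordCompl[p] n with hn'_def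
  have hn'pos : 0 < n' := Nat.ordCompl_pos p hn.ne'
  have hsplit : p ^ a * n' = n := Nat.ordProj_mul_ordCompl_eq_self n p
  have hpn' : ¬ p ∣ n' := Nat.not_dvd_ordCompl hp hn.ne'
  have hcop : Nat.Coprime p n' := (Nat.Prime.coprime_iff_not_dvd hp).2 hpn'
  have hco : (p ^ a).Coprime n' := Nat.Coprime.pow_left a hcop
  have hpa_pos : 0 < p ^ a := pow_pos hp.pos a
  have hn'lt : n' < n := by
    have hdvd : n' ∣ n := Nat.ordCompl_dvd n p
    rcases lt_or_eq_of_le (Nat.le_of_dvd hn hdvd) with h | h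
    · exact h
    · exact absurd (h ▸ hpn) hpn'
  have hfac' : ∀ q, q ≠ p → n'.factorization q = n.factorization q := by
    intro q hq
    rw [hn'_def, Nat.factorization_ordCompl, Finsupp.erase_ne hq]
  -- every prime factor of n' exceeds p
  have hgt : ∀ q ∈ n'.primeFactors, p < q := by
    intro q hq
    obtain ⟨hqp, hqn', -⟩ := Nat.mem_primeFactors.1 hq
    have hqn : q ∣ n := hqn'.trans (Nat.ordCompl_dvd n p)
    have h1 : p ≤ q := Nat.minFac_le_of_dvd hqp.two_le hqn
    rcases lt_or_eq_of_le h1 with h | h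
    · exact h
    · exact absurd (h ▸ hqn') hpn'
  -- the filter sets
  set S := n.primeFactors.filter (fun q => ¬ m ∣ n.factorization q) with hS_def
  set S' := n'.primeFactors.filter (fun q => ¬ m ∣ n'.factorization q) with hS'_def
  have hPmn : Pm m n = WithBot.unbotD 1 S.max := rfl
  have hPmn' : Pm m n' = WithBot.unbotD 1 S'.max := rfl
  have hS'sub : S' ⊆ n'.primeFactors := Finset.filter_subset _ _
  have hpS' : p ∉ S' := by
    intro h
    exact hpn' (Nat.mem_primeFactors.1 (Finset.mem_filter.1 h).1).2.1
  have hSS' : ∀ q, q ≠ p → (q ∈ S ↔ q ∈ S') := by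
    intro q hq
    simp only [hS_def, hS'_def, Finset.mem_filter, Nat.mem_primeFactors]
    rw [hfac' q hq]
    constructor
    · rintro ⟨⟨h1, h2, h3⟩, h4⟩
      refine ⟨⟨h1, ?_, hn'pos.ne'⟩, h4⟩
      have hne : n'.factorization q ≠ 0 := by
        rw [hfac' q hq]; exact fun hc => h4 (hc ▸ dvd_zero m)
      exact Nat.dvd_of_factorization_pos hne
    · rintro ⟨⟨h1, h2, h3⟩, h4⟩
      exact ⟨⟨h1, h2.trans (Nat.ordCompl_dvd n p), hn.ne'⟩, h4⟩
  have hpS : p ∈ S ↔ ¬ m ∣ a := by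
    simp only [hS_def, Finset.mem_filter, Nat.mem_primeFactors, ← ha_def]
    exact ⟨fun h => h.2, fun h => ⟨⟨hp, hpn, hn.ne'⟩, h⟩⟩
  have hS'empty : S' = ∅ ↔ (∃ k, k ^ m = n') := by
    rw [pow_iff_fac hm0 hn'pos.ne']
    constructor
    · intro h q
      by_contra hq
      have hq0 : n'.factorization q ≠ 0 := fun hc => hq (hc ▸ dvd_zero m)
      have hqmem : q ∈ n'.primeFactors := by
        rw [← Nat.support_factorization]
        exact Finsupp.mem_support_iff.2 hq0
      have : q ∈ S' := Finset.mem_filter.2 ⟨hqmem, hq⟩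
      simp [h] at this
    · intro h
      rw [Finset.eq_empty_iff_forall_notMem]
      intro q hq
      exact (Finset.mem_filter.1 hq).2 (h q)
  -- chi values
  have hchi_pa : chiF m (p ^ a) = if m ∣ a then 1 else 0 := by
    rw [chiF_apply]
    have hiff : (∃ k, k ^ m = p ^ a) ↔ m ∣ a := by
      rw [pow_iff_fac hm0 hpa_pos.ne']
      constructor
      · intro h
        have := h p
        rwa [hp.factorization_pow, Finsupp.single_eq_same] at this
      · intro h q
        rw [hp.factorization_pow]
        rcases eq_or_ne q p with rfl | hq
        · rwa [Finsupp.single_eq_same]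
        · rw [Finsupp.single_eq_of_ne' (Ne.symm hq)]
          exact dvd_zero m
    by_cases h : m ∣ a
    · rw [if_pos ⟨hpa_pos.ne', hiff.2 h⟩, if_pos h]
    · rw [if_neg (fun hc => h (hiff.1 hc.2)), if_neg h]
  have hchi_n' : chiF m n' = if (∃ k, k ^ m = n') then 1 else 0 := by
    rw [chiF_apply]
    by_cases h : ∃ k, k ^ m = n'
    · rw [if_pos ⟨hn'pos.ne', h⟩, if_pos h]
    · rw [if_neg (fun hc => h hc.2), if_neg h]
  -- main sum computation
  have hsum_pow : ∑ i ∈ Finset.range a, (lambdaM m (p ^ (i+1)) : ℝ)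
      = (chiF m (p ^ a) : ℝ) - 1 := by
    have h := sum_divisors_lambdaM hm0 (p ^ a)
    rw [Nat.sum_divisors_prime_pow hp, Finset.sum_range_succ'] at h
    rw [pow_zero, lambdaM_one] at h
    have h2 : ∑ i ∈ Finset.range a, lambdaM m (p ^ (i+1)) = chiF m (p ^ a) - 1 := by
      omega
    have h3 := congrArg (fun z : ℤ => (z : ℝ)) h2
    push_cast at h3
    exact h3
  have hLHS : ∑ d ∈ n.divisors, (lambdaM m d : ℝ) * f d.minFac
      = ((chiF m (p ^ a) : ℝ) - 1) * (f p * (chiF m n' : ℝ)) + -f (Pm m n') := by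
    rw [← hsplit, sum_divisors_coprime_mul hpa_pos.ne' hn'pos.ne' hco
      (fun d => (lambdaM m d : ℝ) * f d.minFac)]
    rw [Nat.sum_divisors_prime_pow hp, Finset.sum_range_succ']
    have hzero : ∑ y ∈ n'.divisors, (lambdaM m (p ^ 0 * y) : ℝ) * f (p ^ 0 * y).minFac
        = -f (Pm m n') := by
      simp only [pow_zero, one_mul]
      exact ih n' hn'lt hn'pos
    have hinner : ∀ i, i < a → ∑ y ∈ n'.divisors, (lambdaM m (p ^ (i+1) * y) : ℝ) *
        f (p ^ (i+1) * y).minFac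
        = (lambdaM m (p ^ (i+1)) : ℝ) * (f p * (chiF m n' : ℝ)) := by
      intro i hia
      have hterm : ∀ y ∈ n'.divisors, (lambdaM m (p ^ (i+1) * y) : ℝ) *
          f (p ^ (i+1) * y).minFac
          = (lambdaM m (p ^ (i+1)) : ℝ) * f p * (lambdaM m y : ℝ) := by
        intro y hy
        obtain ⟨hyd, -⟩ := Nat.mem_divisors.1 hy
        have hypos : 0 < y := Nat.pos_of_mem_divisors hy
        have hcopy : (p ^ (i+1)).Coprime y :=
          Nat.Coprime.coprime_dvd_right hyd (Nat.Coprime.pow_left _ hcop)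
        have hminfac : (p ^ (i+1) * y).minFac = p := by
          have hd1 : p ∣ p ^ (i+1) * y :=
            dvd_mul_of_dvd_left (dvd_pow_self p (Nat.succ_ne_zero i)) y
          have hle : (p ^ (i+1) * y).minFac ≤ p := Nat.minFac_le_of_dvd hp.two_le hd1
          have hne1 : p ^ (i+1) * y ≠ 1 := by
            have h1 : 1 < p ^ (i+1) := Nat.one_lt_pow (Nat.succ_ne_zero i) hp.one_lt
            have h2 : p ^ (i+1) ≤ p ^ (i+1) * y := Nat.le_mul_of_pos_right _ hypos
            omega
          have hdn : p ^ (i+1) * y ∣ n := by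
            rw [← hsplit]
            exact mul_dvd_mul (pow_dvd_pow p (by omega : i + 1 ≤ a)) hyd
          have hge : p ≤ (p ^ (i+1) * y).minFac := by
            rw [hp_def]
            exact Nat.minFac_le_of_dvd (Nat.minFac_prime hne1).two_le
              ((Nat.minFac_dvd _).trans hdn)
          exact le_antisymm hle hge
        rw [lambdaM_mul hm0 hcopy, hminfac]
        push_cast
        ring
      rw [Finset.sum_congr rfl hterm]
      have hsum' : ∑ y ∈ n'.divisors, (lambdaM m y : ℝ) = (chiF m n' : ℝ) := by
        have := congrArg (fun z : ℤ => (z : ℝ)) (sum_divisors_lambdaM hm0 n')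
        push_cast at this
        exact this
      rw [← Finset.mul_sum, hsum']
      ring
    rw [Finset.sum_congr rfl (fun i hi => hinner i (Finset.mem_range.1 hi)), hzero,
      ← Finset.sum_mul, hsum_pow]
  rw [hLHS, hchi_pa, hchi_n']
  by_cases hma : m ∣ a
  · -- S = S'
    have hSeq : S = S' := by
      ext q
      rcases eq_or_ne q p with rfl | hq
      · simp only [hpS, hma, not_true_eq_false, false_iff]
        · exact fun h => hpS' h
      · exact hSS' q hq
    rw [hPmn, hPmn', hSeq, if_pos hma]
    ring
  · rw [if_neg hma]
    by_cases hE : ∃ k, k ^ m = n'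
    · -- S = {p}, S' = ∅
      have hS'e : S' = ∅ := hS'empty.2 hE
      have hSeq : S = {p} := by
        ext q
        rcases eq_or_ne q p with rfl | hq
        · simp [hpS, hma]
        · simp only [Finset.mem_singleton, hq, iff_false]
          intro hqS
          have : q ∈ S' := (hSS' q hq).1 hqS
          simp [hS'e] at this
      have h1 : Pm m n = p := by
        rw [hPmn, hSeq, Finset.max_singleton, WithBot.unbotD_coe]
      have h2 : Pm m n' = 1 := by
        rw [hPmn', hS'e, Finset.max_empty, WithBot.unbotD_bot]
      rw [h1, h2, if_pos hE, hf]
      ring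
    · -- S = insert p S', S' nonempty
      have hS'ne : S'.Nonempty := Finset.nonempty_iff_ne_empty.2
        (fun hc => hE (hS'empty.1 hc))
      have hSeq : S = insert p S' := by
        ext q
        rcases eq_or_ne q p with rfl | hq
        · simp [hpS, hma]
        · rw [Finset.mem_insert]
          simp only [hq, false_or]
          exact hSS' q hq
      obtain ⟨q, hq⟩ := Finset.max_of_nonempty hS'ne
      have hqS' : q ∈ S' := Finset.mem_of_max hq
      have hpq : p < q := hgt q (hS'sub hqS')
      have hPmeq : Pm m n = Pm m n' := by
        rw [hPmn, hPmn', hSeq, Finset.max_insert, hq]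
        exact congrArg (WithBot.unbotD 1) (max_eq_right (WithBot.coe_le_coe.2 hpq.le))
      rw [hPmeq, if_neg hE]
      ring
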